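/- For every g in H^4(T^2) of the form g(z) = a z1 + b z2 with a, b ≥ 0 and φ_y(z) = z1 + y z2 with 0 ≤ y ≤ 1, one has ⟨g, φ_y⟩ / ‖g‖_{H^4(T^2)} ≤ (1 + 4x + x^2)^{3/4}/(1+2x), where x ∈ [0,1] is determined by y = √x(2+x)/(1+2x), with equality when (a,b) = (1, √x). -/

import Mathlib

lemma polykey (a b s : ℝ) :
    (a*(1+2*s^2)+b*s*(2+s^2))^4 ≤ (1+4*s^2+s^4)^3*(a^4+4*a^2*b^2+b^4) := by
  have hcb : (0:ℝ) < 1+12*s^2+35*s^4+56*s^6+27*s^8+4*s^10 := by positivity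
  have hH : 0 ≤ (1+12*s^2+35*s^4+56*s^6+27*s^8+4*s^10)*b^2
      + s*(2-8*s^2-42*s^4-8*s^6+2*s^8)*a*b
      + (4+27*s^2+56*s^4+35*s^6+12*s^8+s^10)*a^2 := by
    nlinarith [sq_nonneg (2*(1+12*s^2+35*s^4+56*s^6+27*s^8+4*s^10)*b
        + s*(2-8*s^2-42*s^4-8*s^6+2*s^8)*a),
      mul_nonneg (sq_nonneg a) (by positivity :
        (0:ℝ) ≤ 16+296*s^2+2112*s^4+7608*s^6+15408*s^8+19104*s^10+15408*s^12+7608*s^14+2112*s^16+296*s^18+16*s^20),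
      hcb, mul_pos hcb hcb]
  nlinarith [mul_nonneg (sq_nonneg (b-a*s)) hH]

theorem stmt15 (a b x : ℝ) (ha : 0 ≤ a) (hb : 0 ≤ b) (hx : x ∈ Set.Icc (0:ℝ) 1) :
    (a + b * (Real.sqrt x * (2 + x) / (1 + 2 * x)))
        / (a ^ 4 + 4 * a ^ 2 * b ^ 2 + b ^ 4) ^ ((1:ℝ)/4)
      ≤ (1 + 4 * x + x ^ 2) ^ ((3:ℝ)/4) / (1 + 2 * x) ∧
    (1 + Real.sqrt x * (Real.sqrt x * (2 + x) / (1 + 2 * x)))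
        / (1 + 4 * x + x ^ 2) ^ ((1:ℝ)/4)
      = (1 + 4 * x + x ^ 2) ^ ((3:ℝ)/4) / (1 + 2 * x) := by
  obtain ⟨hx0, hx1⟩ := hx
  set s := Real.sqrt x with hs
  have hs0 : 0 ≤ s := Real.sqrt_nonneg x
  have hsx : s ^ 2 = x := Real.sq_sqrt hx0
  have hden : (0:ℝ) < 1 + 2 * x := by linarith
  have hP : (0:ℝ) < 1 + 4 * x + x ^ 2 := by nlinarith [sq_nonneg x]
  have hP14 : (0:ℝ) < (1 + 4 * x + x ^ 2) ^ ((1:ℝ)/4) := Real.rpow_pos_of_pos hP _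
  have hP34 : (0:ℝ) < (1 + 4 * x + x ^ 2) ^ ((3:ℝ)/4) := Real.rpow_pos_of_pos hP _
  have h14 : (1 + 4 * x + x ^ 2) ^ ((1:ℝ)/4) * (1 + 4 * x + x ^ 2) ^ ((3:ℝ)/4)
      = 1 + 4 * x + x ^ 2 := by
    rw [← Real.rpow_add hP]; norm_num
  constructor
  · by_cases hab : a ^ 4 + 4 * a ^ 2 * b ^ 2 + b ^ 4 = 0
    · have ha4 : a ^ 4 = 0 := by nlinarith [pow_nonneg ha 4, pow_nonneg hb 4, sq_nonneg (a*b)]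
      have hb4 : b ^ 4 = 0 := by nlinarith [pow_nonneg ha 4, pow_nonneg hb 4, sq_nonneg (a*b)]
      have ha0 : a = 0 := by
        have := pow_eq_zero_iff (n := 4) (by norm_num) |>.mp ha4; exact this
      have hb0 : b = 0 := by
        have := pow_eq_zero_iff (n := 4) (by norm_num) |>.mp hb4; exact this
      rw [ha0, hb0]
      simp
      positivity
    · have hQ : (0:ℝ) < a ^ 4 + 4 * a ^ 2 * b ^ 2 + b ^ 4 :=
        lt_of_le_of_ne (by positivity) (Ne.symm hab)
      have hQ14 : (0:ℝ) < (a ^ 4 + 4 * a ^ 2 * b ^ 2 + b ^ 4) ^ ((1:ℝ)/4) :=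
        Real.rpow_pos_of_pos hQ _
      rw [div_le_div_iff₀ hQ14 hden]
      have hL : 0 ≤ (a + b * (s * (2 + x) / (1 + 2 * x))) * (1 + 2 * x) := by
        have : 0 ≤ s * (2 + x) / (1 + 2 * x) := by positivity
        positivity
      have hR : 0 ≤ (1 + 4 * x + x ^ 2) ^ ((3:ℝ)/4)
          * (a ^ 4 + 4 * a ^ 2 * b ^ 2 + b ^ 4) ^ ((1:ℝ)/4) := by positivity
      refine (pow_le_pow_iff_left₀ hL hR (by norm_num : (4:ℕ) ≠ 0)).mp ?_
      have e1 : ((1 + 4 * x + x ^ 2) ^ ((3:ℝ)/4)) ^ (4:ℕ) = (1 + 4 * x + x ^ 2) ^ (3:ℕ) := by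
        rw [← Real.rpow_natCast ((1 + 4 * x + x ^ 2) ^ ((3:ℝ)/4)) 4, ← Real.rpow_mul hP.le]
        norm_num
      have e2 : ((a ^ 4 + 4 * a ^ 2 * b ^ 2 + b ^ 4) ^ ((1:ℝ)/4)) ^ (4:ℕ)
          = a ^ 4 + 4 * a ^ 2 * b ^ 2 + b ^ 4 := by
        rw [← Real.rpow_natCast ((a ^ 4 + 4 * a ^ 2 * b ^ 2 + b ^ 4) ^ ((1:ℝ)/4)) 4,
          ← Real.rpow_mul hQ.le]
        norm_num
      rw [mul_pow, mul_pow, e1, e2]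
      have e3 : (a + b * (s * (2 + x) / (1 + 2 * x))) ^ 4 * (1 + 2 * x) ^ 4
          = (a * (1 + 2 * s ^ 2) + b * s * (2 + s ^ 2)) ^ 4 := by
        rw [hsx]; field_simp
      rw [e3, ← hsx]
      calc (a * (1 + 2 * s ^ 2) + b * s * (2 + s ^ 2)) ^ 4
          ≤ (1 + 4 * s ^ 2 + s ^ 4) ^ 3 * (a ^ 4 + 4 * a ^ 2 * b ^ 2 + b ^ 4) := polykey a b s
        _ = (1 + 4 * s ^ 2 + (s ^ 2) ^ 2) ^ 3 * (a ^ 4 + 4 * a ^ 2 * b ^ 2 + b ^ 4) := by ring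
  · have hnum : 1 + s * (s * (2 + x) / (1 + 2 * x)) = (1 + 4 * x + x ^ 2) / (1 + 2 * x) := by
      field_simp
      nlinarith [hsx]
    rw [hnum, div_div, div_eq_div_iff (by positivity) hden.ne']
    calc (1 + 4 * x + x ^ 2) * (1 + 2 * x)
        = (1 + 4 * x + x ^ 2) ^ ((3:ℝ)/4) * ((1 + 4*x + x^2) ^ ((1:ℝ)/4) * (1 + 4*x+x^2) ^ ((3:ℝ)/4)) * (1+2*x) / (1+4*x+x^2) ^ ((3:ℝ)/4) := by
          rw [h14]; field_simp
      _ = (1 + 4 * x + x ^ 2) ^ ((3:ℝ)/4) * ((1 + 2 * x) * (1 + 4 * x + x ^ 2) ^ ((1:ℝ)/4)) := by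
          field_simp
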